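/- For every connected graph G on n ≥ 2 vertices with vertex connectivity ν and remoteness ρ, the product satisfies ν·ρ ≤ n-1, with equality if and only if G is the complete graph K_n. -/

import Mathlib

open SimpleGraph Finset

/-- The transmission of a vertex: the sum of distances from `v` to all other vertices. -/
noncomputable def transmission {n : ℕ} (G : SimpleGraph (Fin n)) (v : Fin n) : ℕ :=
  ∑ u, G.dist v u

/-- The proximity: the minimum average distance from a vertex to all others. -/
noncomputable def proximity {n : ℕ} (G : SimpleGraph (Fin n)) : ℝ :=
  sInf {x : ℝ | ∃ v : Fin n, x = transmission G v} / (n - 1)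

/-- The remoteness: the maximum average distance from a vertex to all others. -/
noncomputable def remoteness {n : ℕ} (G : SimpleGraph (Fin n)) : ℝ :=
  sSup {x : ℝ | ∃ v : Fin n, x = transmission G v} / (n - 1)

/-- The vertex connectivity: the minimum number of vertices whose removal disconnects the
graph or reduces it to a single vertex. -/
noncomputable def vertexConnectivity {n : ℕ} (G : SimpleGraph (Fin n)) : ℕ :=
  sInf {k | ∃ S : Finset (Fin n),
    S.card = k ∧ (¬ (G.induce ((↑S : Set (Fin n))ᶜ)).Connected ∨ n - S.card = 1)}

/-- number of vertices at distance at least `j` from `v` -/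
noncomputable def mm {n : ℕ} (G : SimpleGraph (Fin n)) (v : Fin n) (j : ℕ) : ℕ :=
  (univ.filter (fun u => j ≤ G.dist v u)).card

lemma dist_lt_n {n : ℕ} {G : SimpleGraph (Fin n)} (hG : G.Connected) (v u : Fin n) :
    G.dist v u < n := by
  obtain ⟨p, hp, hl⟩ := hG.exists_path_of_dist v u
  have := hp.length_lt
  rw [hl] at this
  simpa using this

lemma transmission_eq_sum {n : ℕ} {G : SimpleGraph (Fin n)} (hG : G.Connected) (v : Fin n) :
    transmission G v = ∑ j ∈ range n, mm G v (j + 1) := by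
  unfold transmission mm
  have h1 : ∀ u : Fin n, G.dist v u = ∑ j ∈ range n, if j + 1 ≤ G.dist v u then 1 else 0 := by
    intro u
    rw [Finset.sum_boole]
    have : (range n).filter (fun j => j + 1 ≤ G.dist v u) = range (G.dist v u) := by
      ext j
      simp only [mem_filter, mem_range]
      have := dist_lt_n hG v u
      omega
    rw [this]
    simp
  calc ∑ u, G.dist v u = ∑ u, ∑ j ∈ range n, if j + 1 ≤ G.dist v u then 1 else 0 := by
        exact Finset.sum_congr rfl fun u _ => h1 u
    _ = ∑ j ∈ range n, ∑ u, if j + 1 ≤ G.dist v u then 1 else 0 := Finset.sum_comm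
    _ = ∑ j ∈ range n, (univ.filter (fun u => j + 1 ≤ G.dist v u)).card := by
        refine Finset.sum_congr rfl fun j _ => ?_
        rw [Finset.sum_boole]
        simp

lemma mm_one {n : ℕ} {G : SimpleGraph (Fin n)} (hG : G.Connected) (v : Fin n) :
    mm G v 1 = n - 1 := by
  unfold mm
  have : (univ.filter (fun u => 1 ≤ G.dist v u)) = univ.erase v := by
    ext u
    simp only [mem_filter, mem_univ, true_and, mem_erase]
    have hz : G.dist v u = 0 ↔ v = u := hG.dist_eq_zero_iff
    constructor
    · intro h
      exact ⟨fun he => by subst he; rw [SimpleGraph.dist_self] at h; omega, trivial⟩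
    · intro ⟨h, _⟩
      have : G.dist v u ≠ 0 := fun he => h (hz.mp he).symm
      omega
  rw [this, Finset.card_erase_of_mem (mem_univ v)]
  simp

lemma mm_antitone {n : ℕ} {G : SimpleGraph (Fin n)} (v : Fin n) {i j : ℕ} (h : i ≤ j) :
    mm G v j ≤ mm G v i :=
  Finset.card_le_card (Finset.monotone_filter_right _ (fun u _ hu => le_trans h hu))

lemma cut_lemma {n : ℕ} {G : SimpleGraph (Fin n)} (hG : G.Connected) (v : Fin n) {i : ℕ}
    (hi : 1 ≤ i) (hm : 0 < mm G v (i + 1)) :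
    vertexConnectivity G + mm G v (i + 1) ≤ mm G v i := by
  set L : Finset (Fin n) := univ.filter (fun u => G.dist v u = i) with hL
  have hsplit : mm G v i = L.card + mm G v (i + 1) := by
    unfold mm
    rw [← Finset.card_union_of_disjoint (by
      simp only [Finset.disjoint_filter, hL, mem_filter]
      intro u _ h1 h2
      omega)]
    congr 1
    ext u
    simp only [hL, Finset.mem_union, mem_filter, mem_univ, true_and]
    omega
  have hvc : vertexConnectivity G ≤ L.card := by
    apply Nat.sInf_le
    refine ⟨L, rfl, Or.inl ?_⟩
    obtain ⟨u, hu⟩ : ∃ u, i + 1 ≤ G.dist v u := by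
      unfold mm at hm
      rw [Finset.card_pos] at hm
      obtain ⟨u, hu⟩ := hm
      simp only [mem_filter] at hu
      exact ⟨u, hu.2⟩
    have hvmem : v ∈ ((↑L : Set (Fin n))ᶜ) := by
      simp only [Set.mem_compl_iff, Finset.coe_filter, Set.mem_setOf_eq, hL, mem_univ, true_and]
      rw [SimpleGraph.dist_self]
      omega
    have humem : u ∈ ((↑L : Set (Fin n))ᶜ) := by
      simp only [Set.mem_compl_iff, Finset.coe_filter, Set.mem_setOf_eq, hL, mem_univ, true_and]
      omega
    intro hc
    have hkey : ∀ {a b : ((↑L : Set (Fin n))ᶜ : Set (Fin n))}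
        (_ : (G.induce ((↑L : Set (Fin n))ᶜ)).Walk a b), G.dist v ↑a < i → G.dist v ↑b < i := by
      intro a b w
      induction w with
      | nil => exact id
      | @cons a c b ha p ih =>
        intro h
        apply ih
        have hadj : G.Adj ↑a ↑c := ha
        have h1 : G.dist v ↑c ≤ G.dist v ↑a + 1 := by
          have ht := hG.dist_triangle (u := v) (v := (↑a : Fin n)) (w := ↑c)
          rwa [SimpleGraph.dist_eq_one_iff_adj.mpr hadj] at ht
        have h2 : G.dist v ↑c ≠ i := by
          have := c.2
          simp only [Set.mem_compl_iff, Finset.coe_filter, Set.mem_setOf_eq, hL, mem_univ,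
            true_and] at this
          exact this
        omega
    obtain ⟨w⟩ := hc.preconnected ⟨v, hvmem⟩ ⟨u, humem⟩
    have h3 : G.dist v u < i := hkey w (by rw [SimpleGraph.dist_self]; omega)
    omega
  omega

lemma chain_lemma {n : ℕ} {G : SimpleGraph (Fin n)} (hG : G.Connected) (v : Fin n) (j : ℕ)
    (h : 0 < mm G v (j + 1)) : mm G v (j + 1) + j * vertexConnectivity G ≤ n - 1 := by
  induction j with
  | zero => simp [mm_one hG v]
  | succ j ih =>
    have h1 : mm G v (j + 1 + 1) ≤ mm G v (j + 1) := mm_antitone v (by omega)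
    have h2 := cut_lemma hG v (i := j + 1) (by omega) h
    have h3 := ih (by omega)
    calc mm G v (j + 1 + 1) + (j + 1) * vertexConnectivity G
        = (vertexConnectivity G + mm G v (j + 1 + 1)) + j * vertexConnectivity G := by ring
      _ ≤ mm G v (j + 1) + j * vertexConnectivity G := by omega
      _ ≤ n - 1 := h3

lemma vc_le_of_ne_top {n : ℕ} (hn : 2 ≤ n) {G : SimpleGraph (Fin n)} (hne : G ≠ ⊤) :
    vertexConnectivity G ≤ n - 2 := by
  obtain ⟨u, w, huw, hadj⟩ : ∃ u w : Fin n, u ≠ w ∧ ¬ G.Adj u w := by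
    by_contra hc
    push_neg at hc
    apply hne
    ext a b
    simp only [top_adj]
    exact ⟨fun h => h.ne, fun h => hc a b h⟩
  set S : Finset (Fin n) := univ \ {u, w} with hS
  have hcard : S.card = n - 2 := by
    rw [hS, Finset.card_sdiff_of_subset (Finset.subset_univ _)]
    simp [Finset.card_insert_of_notMem, huw]
  suffices hmem : ¬ (G.induce ((↑S : Set (Fin n))ᶜ)).Connected by
    calc vertexConnectivity G ≤ S.card := Nat.sInf_le ⟨S, rfl, Or.inl hmem⟩
      _ = n - 2 := hcard
  have hset : ((↑S : Set (Fin n))ᶜ) = {u, w} := by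
    rw [hS]
    ext x
    simp only [Set.mem_compl_iff, Finset.coe_sdiff, Finset.coe_univ, Set.mem_diff, Set.mem_univ,
      true_and, Finset.coe_insert, Finset.coe_singleton, Set.mem_insert_iff,
      Set.mem_singleton_iff, not_not]
  intro hc
  have hbot : G.induce ((↑S : Set (Fin n))ᶜ) = ⊥ := by
    ext a b
    simp only [SimpleGraph.bot_adj, iff_false]
    intro hab
    have hab' : G.Adj (a : Fin n) (b : Fin n) := hab
    have ha := (Set.ext_iff.mp hset ↑a).mp a.2
    have hb := (Set.ext_iff.mp hset ↑b).mp b.2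
    simp only [Set.mem_insert_iff, Set.mem_singleton_iff] at ha hb
    rcases ha with ha | ha <;> rcases hb with hb | hb
    · exact hab'.ne (by rw [ha, hb])
    · exact hadj (by rwa [ha, hb] at hab')
    · exact hadj (by rw [ha, hb] at hab'; exact hab'.symm)
    · exact hab'.ne (by rw [ha, hb])
  rw [hbot] at hc
  have hnt : Nontrivial ↥((↑S : Set (Fin n))ᶜ) := by
    have hu : u ∈ ((↑S : Set (Fin n))ᶜ) := by rw [hset]; exact Or.inl rfl
    have hw : w ∈ ((↑S : Set (Fin n))ᶜ) := by rw [hset]; exact Or.inr rfl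
    exact ⟨⟨u, hu⟩, ⟨w, hw⟩, by simp [huw]⟩
  exact SimpleGraph.not_connected_bot hc

lemma key_lt {n : ℕ} (hn : 2 ≤ n) {G : SimpleGraph (Fin n)} (hG : G.Connected) (hne : G ≠ ⊤)
    (v : Fin n) : vertexConnectivity G * transmission G v < (n - 1) ^ 2 := by
  set ν := vertexConnectivity G with hν
  set e := univ.sup (G.dist v) with he
  have hle : ∀ u, G.dist v u ≤ e := fun u => Finset.le_sup (mem_univ u)
  obtain ⟨u0, -, hu0⟩ := Finset.exists_mem_eq_sup univ ⟨v, mem_univ v⟩ (G.dist v)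
  have hmpos : ∀ j, j ≤ e → 0 < mm G v j := by
    intro j hj
    apply Finset.card_pos.mpr
    exact ⟨u0, mem_filter.mpr ⟨mem_univ _, by omega⟩⟩
  have hmzero : ∀ j, e < j → mm G v j = 0 := by
    intro j hj
    apply Finset.card_eq_zero.mpr
    rw [Finset.filter_eq_empty_iff]
    intro u _
    have := hle u
    omega
  have hecc : e ≤ n - 1 := by
    have := dist_lt_n hG v u0
    omega
  by_cases hecase : e ≤ 1
  · have htv : transmission G v ≤ n - 1 := by
      rw [transmission_eq_sum hG v]
      have h0 : ∀ j ∈ range n, mm G v (j + 1) = if j = 0 then n - 1 else 0 := by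
        intro j _
        by_cases hj : j = 0
        · simp [hj, mm_one hG v]
        · simp only [hj, if_false]
          exact hmzero (j + 1) (by omega)
      rw [Finset.sum_congr rfl h0, Finset.sum_ite_eq' (range n) 0 (fun _ => n - 1),
        if_pos (Finset.mem_range.mpr (by omega : 0 < n))]
    have hvc : ν ≤ n - 2 := vc_le_of_ne_top hn hne
    calc ν * transmission G v ≤ (n - 2) * (n - 1) := Nat.mul_le_mul hvc htv
      _ < (n - 1) ^ 2 := by
        have h1 : 0 < n - 1 := by omega
        have h2 : n - 2 < n - 1 := by omega
        calc (n - 2) * (n - 1) < (n - 1) * (n - 1) := Nat.mul_lt_mul_of_lt_of_le h2 (le_refl _) h1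
          _ = (n - 1) ^ 2 := (sq (n - 1)).symm
  · push_neg at hecase
    have hchain : ∀ j, j + 1 ≤ e → mm G v (j + 1) + j * ν ≤ n - 1 := fun j hj =>
      chain_lemma hG v j (hmpos _ hj)
    have hlastm := hmpos e (le_refl e)
    have hlast : (e - 1) * ν + 1 ≤ n - 1 := by
      have h1 := hchain (e - 1) (by omega)
      have h2 : e - 1 + 1 = e := by omega
      rw [h2] at h1
      omega
    have ht : transmission G v = ∑ j ∈ range e, mm G v (j + 1) := by
      rw [transmission_eq_sum hG v]
      symm
      apply Finset.sum_subset (Finset.range_subset_range.mpr (by omega))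
      intro j _ hj
      rw [Finset.mem_range] at hj
      push_neg at hj
      exact hmzero (j + 1) (by omega)
    -- cast to ℤ
    set N : ℤ := (n : ℤ) - 1 with hN
    set a : ℤ := (ν : ℤ) with ha
    set E : ℤ := (e : ℤ) with hE
    have hNpos : 1 ≤ N := by rw [hN]; push_cast; omega
    have hEtwo : 2 ≤ E := by rw [hE]; push_cast; omega
    have hanneg : 0 ≤ a := by rw [ha]; positivity
    have hlastZ : (E - 1) * a + 1 ≤ N := by
      zify [show 1 ≤ e by omega, show 1 ≤ n by omega] at hlast
      exact hlast
    have hZsum : a * (transmission G v : ℤ) ≤ ∑ j ∈ range e, (a * N - a ^ 2 * j) := by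
      rw [ht]
      push_cast [Finset.mul_sum]
      apply Finset.sum_le_sum
      intro j hj
      rw [Finset.mem_range] at hj
      have hc := hchain j (by omega)
      zify [show 1 ≤ n by omega] at hc
      nlinarith [hanneg, hc]
    have hgauss : (∑ j ∈ range e, (j : ℤ)) * 2 = E * (E - 1) := by
      have h := Finset.sum_range_id_mul_two e
      zify [show 1 ≤ e by omega] at h
      push_cast at h
      exact_mod_cast h
    have hsum2 : (∑ j ∈ range e, (a * N - a ^ 2 * j)) * 2
        = 2 * E * (a * N) - a ^ 2 * (E * (E - 1)) := by
      rw [Finset.sum_sub_distrib, Finset.sum_const, Finset.card_range, ← Finset.mul_sum,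
        nsmul_eq_mul]
      rw [hE]
      linear_combination (-(a ^ 2)) * hgauss
    have hE1 : (1 : ℤ) ≤ E - 1 := by linarith
    have h1 : (1 : ℤ) ≤ N - (E - 1) * a := by linarith
    have h1sq : (1 : ℤ) ≤ (N - (E - 1) * a) ^ 2 := by nlinarith
    have key : (E - 1) * (2 * N ^ 2 - (2 * E * (a * N) - a ^ 2 * (E * (E - 1))))
        = E * (N - (E - 1) * a) ^ 2 + (E - 2) * N ^ 2 := by ring
    have hA : E ≤ E * (N - (E - 1) * a) ^ 2 := by
      calc E = E * 1 := by ring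
        _ ≤ E * (N - (E - 1) * a) ^ 2 := mul_le_mul_of_nonneg_left h1sq (by linarith)
    have hB : (0 : ℤ) ≤ (E - 2) * N ^ 2 := mul_nonneg (by linarith) (sq_nonneg N)
    have hpos : 0 < (E - 1) * (2 * N ^ 2 - (2 * E * (a * N) - a ^ 2 * (E * (E - 1)))) := by
      rw [key]; linarith
    have hfinal : 2 * E * (a * N) - a ^ 2 * (E * (E - 1)) < 2 * N ^ 2 := by
      by_contra hcon
      push_neg at hcon
      have h2 : 2 * N ^ 2 - (2 * E * (a * N) - a ^ 2 * (E * (E - 1))) ≤ 0 := by linarith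
      have h3 := mul_nonpos_of_nonneg_of_nonpos (by linarith : (0:ℤ) ≤ E - 1) h2
      linarith
    have hgoal : a * (transmission G v : ℤ) < N ^ 2 := by linarith
    rw [hN, ha] at hgoal
    zify [show 1 ≤ n by omega]
    exact hgoal

lemma transmission_top {n : ℕ} (v : Fin n) :
    transmission (⊤ : SimpleGraph (Fin n)) v = n - 1 := by
  unfold transmission
  rw [← Finset.sum_erase_add univ _ (mem_univ v), SimpleGraph.dist_self, add_zero]
  rw [Finset.sum_congr rfl (fun u hu => SimpleGraph.dist_top_of_ne
    (fun h => (Finset.mem_erase.mp hu).1 h.symm))]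
  rw [Finset.sum_const, Finset.card_erase_of_mem (mem_univ v)]
  simp

lemma induce_top_eq {n : ℕ} (s : Set (Fin n)) :
    (⊤ : SimpleGraph (Fin n)).induce s = ⊤ := by
  ext a b
  simp only [SimpleGraph.top_adj]
  constructor
  · intro h
    have h' : (a : Fin n) ≠ b := h
    exact fun he => h' (by rw [he])
  · intro h
    have : (a : Fin n) ≠ b := fun he => h (Subtype.coe_injective he)
    exact this

lemma vc_top {n : ℕ} (hn : 2 ≤ n) :
    vertexConnectivity (⊤ : SimpleGraph (Fin n)) = n - 1 := by
  have hmem : (⟨0, by omega⟩ : Fin n) ∈ (univ : Finset (Fin n)) := mem_univ _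
  have hS : ((univ : Finset (Fin n)).erase ⟨0, by omega⟩).card = n - 1 := by
    rw [Finset.card_erase_of_mem hmem]
    simp
  have hin : (n - 1) ∈ {k | ∃ S : Finset (Fin n),
      S.card = k ∧ (¬ ((⊤ : SimpleGraph (Fin n)).induce ((↑S : Set (Fin n))ᶜ)).Connected
        ∨ n - S.card = 1)} := by
    exact ⟨_, hS, Or.inr (by rw [hS]; omega)⟩
  apply le_antisymm
  · exact Nat.sInf_le hin
  · apply le_csInf ⟨_, hin⟩
    rintro k ⟨S, hcard, hor⟩
    have hkn : k ≤ n := by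
      rw [← hcard]
      calc S.card ≤ (univ : Finset (Fin n)).card := Finset.card_le_univ S
        _ = n := by simp
    rcases hor with hdisc | hone
    · by_contra hlt
      push_neg at hlt
      apply hdisc
      rw [induce_top_eq]
      have hne : ((↑S : Set (Fin n))ᶜ).Nonempty := by
        rcases Set.eq_empty_or_nonempty ((↑S : Set (Fin n))ᶜ) with he | hne
        · exfalso
          have : (↑S : Set (Fin n)) = Set.univ := by
            rw [← Set.compl_empty, ← he, compl_compl]
          have : S = univ := Finset.coe_injective (by simpa using this)
          rw [this] at hcard
          simp at hcard
          omega
        · exact hne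
      have : Nonempty ↥((↑S : Set (Fin n))ᶜ) := hne.to_subtype
      exact SimpleGraph.connected_top
    · omega

lemma remoteness_eq {n : ℕ} (hn : 2 ≤ n) (G : SimpleGraph (Fin n)) :
    ∃ v0 : Fin n, (∀ v, transmission G v ≤ transmission G v0) ∧
      remoteness G = (transmission G v0 : ℝ) / ((n : ℝ) - 1) := by
  have hne : (univ : Finset (Fin n)).Nonempty := ⟨⟨0, by omega⟩, mem_univ _⟩
  obtain ⟨v0, -, hmax⟩ := Finset.exists_max_image univ (fun v => transmission G v) hne
  refine ⟨v0, fun v => hmax v (mem_univ v), ?_⟩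
  unfold remoteness
  congr 1
  apply IsGreatest.csSup_eq
  constructor
  · exact ⟨v0, rfl⟩
  · rintro x ⟨v, rfl⟩
    exact_mod_cast hmax v (mem_univ v)

theorem connectivity_mul_remoteness {n : ℕ} (hn : 2 ≤ n) (G : SimpleGraph (Fin n))
    (hG : G.Connected) :
    (vertexConnectivity G : ℝ) * remoteness G ≤ n - 1 ∧
      ((vertexConnectivity G : ℝ) * remoteness G = n - 1 ↔ G = ⊤) := by
  obtain ⟨v0, hmax, hrem⟩ := remoteness_eq hn G
  have hn2 : (2 : ℝ) ≤ (n : ℝ) := by exact_mod_cast hn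
  have hden : (0 : ℝ) < (n : ℝ) - 1 := by linarith
  have hcastN : ((n - 1 : ℕ) : ℝ) = (n : ℝ) - 1 := by
    rw [Nat.cast_sub (by omega)]
    simp
  by_cases htop : G = ⊤
  · subst htop
    have hvc := vc_top (n := n) hn
    have hone : remoteness (⊤ : SimpleGraph (Fin n)) = 1 := by
      rw [hrem, transmission_top v0, hcastN, div_self (by linarith)]
    have heq : (vertexConnectivity (⊤ : SimpleGraph (Fin n)) : ℝ)
        * remoteness (⊤ : SimpleGraph (Fin n)) = (n : ℝ) - 1 := by
      rw [hone, hvc, mul_one, hcastN]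
    exact ⟨le_of_eq heq, ⟨fun _ => rfl, fun _ => heq⟩⟩
  · have hklt := key_lt hn hG htop v0
    have hcast : (vertexConnectivity G : ℝ) * (transmission G v0 : ℝ) < ((n : ℝ) - 1) ^ 2 := by
      have h1 : ((vertexConnectivity G * transmission G v0 : ℕ) : ℝ)
          < (((n - 1) ^ 2 : ℕ) : ℝ) := by exact_mod_cast hklt
      push_cast [hcastN] at h1
      exact h1
    have hlt : (vertexConnectivity G : ℝ) * remoteness G < (n : ℝ) - 1 := by
      rw [hrem, mul_div_assoc']
      rw [div_lt_iff₀ hden]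
      nlinarith [hcast]
    exact ⟨le_of_lt hlt, ⟨fun h => absurd h (ne_of_lt hlt), fun h => absurd h htop⟩⟩
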